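/- Let q_1, …, q_r be distinct primes, let t_1, …, t_r be positive natural numbers, and let m = q_1^{t_1} ⋯ q_r^{t_r}. Then for every natural number n and every Boolean vector a ∈ {0,1}^n: m divides |a|₁ if and only if for every i ∈ {1, …, r} and every j < t_i, the evaluation at a of the (q_i^j)-th elementary symmetric polynomial in n variables over ℤ_{q_i} equals 0. -/

import Mathlib

open Finset

lemma eval_esymm_bool {p n J : ℕ} (a : Fin n → Bool) :
    MvPolynomial.eval (fun k => if a k then (1 : ZMod p) else 0)
      (MvPolynomial.esymm (Fin n) (ZMod p) J) =
    ((Finset.univ.filter fun k => a k = true).card.choose J : ZMod p) := by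
  classical
  set F := Finset.univ.filter (fun k => a k = true) with hF
  rw [MvPolynomial.esymm, map_sum]
  simp only [map_prod, MvPolynomial.eval_X]
  have key : ∀ S : Finset (Fin n), (∏ i ∈ S, if a i then (1 : ZMod p) else 0) =
      if S ⊆ F then 1 else 0 := by
    intro S
    by_cases h : S ⊆ F
    · rw [if_pos h, Finset.prod_eq_one]
      intro i hi
      have := h hi
      simp only [hF, mem_filter] at this
      simp [this.2]
    · rw [if_neg h]
      obtain ⟨i, hi, hni⟩ := Finset.not_subset.mp h
      refine Finset.prod_eq_zero hi ?_
      simp only [hF, mem_filter, mem_univ, true_and] at hni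
      simp [hni]
  rw [Finset.sum_congr rfl fun S _ => key S, Finset.sum_boole]
  have : (Finset.univ.powersetCard J).filter (· ⊆ F) = F.powersetCard J := by
    ext S
    simp only [mem_filter, mem_powersetCard, subset_univ, true_and, and_comm]
  rw [this, Finset.card_powersetCard]

lemma choose_pow_eq_digit {p : ℕ} [Fact p.Prime] (w j : ℕ) :
    ((w.choose (p ^ j) : ZMod p)) = ((w / p ^ j : ℕ) : ZMod p) := by
  have hp1 : 1 < p := Fact.out (p := p.Prime) |>.one_lt
  have h := Choose.choose_modEq_choose_mul_prod_range_choose (p := p) (n := w) (k := p ^ j) j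
  rw [Nat.div_self (pow_pos (by omega) j)] at h
  have h2 : ∀ i ∈ Finset.range j, (w / p ^ i % p).choose (p ^ j / p ^ i % p) = 1 := by
    intro i hi
    rw [Finset.mem_range] at hi
    have : p ^ j / p ^ i = p ^ (j - i) := Nat.pow_div (le_of_lt hi) (by omega)
    rw [this, Nat.pow_mod, Nat.mod_self, Nat.zero_pow (by omega), Nat.zero_mod,
      Nat.choose_zero_right]
  rw [Finset.prod_congr rfl h2, Finset.prod_const_one, Nat.cast_one, mul_one,
    Nat.choose_one_right] at h
  have := (ZMod.intCast_eq_intCast_iff _ _ _).mpr h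
  exact_mod_cast this

lemma pow_dvd_iff_digits {p : ℕ} (hp : 1 < p) (w t : ℕ) :
    p ^ t ∣ w ↔ ∀ j < t, p ∣ w / p ^ j := by
  induction t with
  | zero => simp
  | succ t ih =>
    constructor
    · intro h j hj
      have hd : p ^ (j + 1) ∣ w := dvd_trans (pow_dvd_pow p hj) h
      have hj' : p ^ j ∣ w := dvd_trans (pow_dvd_pow p (Nat.le_succ j)) hd
      rw [Nat.dvd_div_iff_mul_dvd hj', ← pow_succ]
      exact hd
    · intro h
      have ht : p ^ t ∣ w := ih.mpr fun j hj => h j (by omega)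
      have h2 := h t (by omega)
      rw [Nat.dvd_div_iff_mul_dvd ht, ← pow_succ] at h2
      exact h2

/-- Let `q_1, …, q_r` be distinct primes, `t_1, …, t_r ≥ 1`, and
`m = q_1^{t_1} ⋯ q_r^{t_r}`. Then for every Boolean vector `a ∈ {0,1}^n`, `m` divides
`|a|₁` iff for every `i` and every `j < t_i`, the `(q_i^j)`-th elementary symmetric
polynomial over `ℤ_{q_i}` vanishes at `a`. -/
theorem dvd_weight_iff_esymm_eval_eq_zero (r : ℕ) (q : Fin r → ℕ)
    (hq : ∀ i, (q i).Prime) (hinj : Function.Injective q)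
    (t : Fin r → ℕ) (ht : ∀ i, 0 < t i) (m : ℕ) (hm : m = ∏ i, q i ^ t i)
    (n : ℕ) (a : Fin n → Bool) :
    m ∣ (Finset.univ.filter fun k => a k = true).card ↔
      ∀ i : Fin r, ∀ j < t i,
        MvPolynomial.eval (fun k => if a k then (1 : ZMod (q i)) else 0)
          (MvPolynomial.esymm (Fin n) (ZMod (q i)) (q i ^ j)) = 0 := by
  set w := (Finset.univ.filter fun k => a k = true).card with hw
  have step1 : m ∣ w ↔ ∀ i, q i ^ t i ∣ w := by
    constructor
    · intro h i
      exact dvd_trans (hm ▸ Finset.dvd_prod_of_mem _ (Finset.mem_univ i)) h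
    · intro h
      have : (∏ i, (q i ^ t i : ℤ)) ∣ (w : ℤ) := by
        apply Finset.prod_dvd_of_coprime
        · intro i _ j _ hij
          have hc : Nat.Coprime (q i ^ t i) (q j ^ t j) :=
            ((Nat.coprime_primes (hq i) (hq j)).mpr
              fun h' => hij (hinj h')).pow _ _
          have := Nat.isCoprime_iff_coprime.mpr hc
          show IsCoprime ((q i ^ t i : ℕ) : ℤ) ((q j ^ t j : ℕ) : ℤ)
          exact_mod_cast this
        · intro i _
          exact_mod_cast h i
      rw [hm]
      exact_mod_cast (Int.natCast_dvd_natCast.mp (by exact_mod_cast this))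
  rw [step1]
  apply forall_congr'
  intro i
  have : Fact (q i).Prime := ⟨hq i⟩
  rw [pow_dvd_iff_digits (hq i).one_lt]
  apply forall_congr'
  intro j
  apply imp_congr_right
  intro _
  rw [eval_esymm_bool, choose_pow_eq_digit, ZMod.natCast_eq_zero_iff]
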